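/- Let n ≥ 3 be an integer and let k ≥ 1 be odd. In the quotient ring R_{n,k} = ℤ[X_1,…,X_n]/(X_1^{k+1},…,X_n^{k+1}), with A_i the image of X_i, one has [(∏_{i=2}^{n} (A_1 − A_i)) · (A_2 − A_3)]^k = 0. -/

import Mathlib

open MvPolynomial Finset

lemma xi_key3 (k : ℕ) (hodd : Odd k) :
    ((X 0 - X 1) * (X 0 - X 2) * (X 1 - X 2) : MvPolynomial (Fin 3) ℤ) ^ k ∈
      Ideal.span (Set.range fun i : Fin 3 => (X i : MvPolynomial (Fin 3) ℤ) ^ (k + 1)) := by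
  set F : MvPolynomial (Fin 3) ℤ := ((X 0 - X 1) * (X 0 - X 2) * (X 1 - X 2)) ^ k with hF
  have hhom : F.IsHomogeneous (3 * k) := by
    have h1 : ((X 0 - X 1) * (X 0 - X 2) * (X 1 - X 2) : MvPolynomial (Fin 3) ℤ).IsHomogeneous 3 :=
      (((isHomogeneous_X _ _).sub (isHomogeneous_X _ _)).mul
        ((isHomogeneous_X _ _).sub (isHomogeneous_X _ _))).mul
        ((isHomogeneous_X _ _).sub (isHomogeneous_X _ _))
    simpa [mul_comm] using h1.pow k
  set d : Fin 3 →₀ ℕ := Finsupp.single 0 k + Finsupp.single 1 k + Finsupp.single 2 k with hd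
  have hcoeff : coeff d F = 0 := by
    have hswap : rename (Equiv.swap (0 : Fin 3) 1) F = -F := by
      have h1 : ((X 1 - X 0) * (X 1 - X 2) * (X 0 - X 2) : MvPolynomial (Fin 3) ℤ)
          = -((X 0 - X 1) * (X 0 - X 2) * (X 1 - X 2)) := by ring
      simp only [hF, map_pow, map_mul, map_sub, rename_X, Equiv.swap_apply_left,
        Equiv.swap_apply_right, Equiv.swap_apply_of_ne_of_ne (by decide : (2:Fin 3) ≠ 0)
          (by decide : (2:Fin 3) ≠ 1)]
      rw [h1, hodd.neg_pow]
    have hdd : Finsupp.mapDomain (Equiv.swap (0 : Fin 3) 1) d = d := by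
      simp only [hd, Finsupp.mapDomain_add, Finsupp.mapDomain_single, Equiv.swap_apply_left,
        Equiv.swap_apply_right, Equiv.swap_apply_of_ne_of_ne (by decide : (2:Fin 3) ≠ 0)
          (by decide : (2:Fin 3) ≠ 1)]
      abel
    have h := coeff_rename_mapDomain (Equiv.swap (0 : Fin 3) 1) (Equiv.injective _) F d
    rw [hdd, hswap, coeff_neg] at h
    linarith
  have hspan : Ideal.span (Set.range fun i : Fin 3 => (X i : MvPolynomial (Fin 3) ℤ) ^ (k + 1))
      = Ideal.span ((fun s => monomial s (1 : ℤ)) ''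
        Set.range (fun i : Fin 3 => Finsupp.single i (k + 1))) := by
    rw [← Set.range_comp]
    congr 1
    ext p
    simp [Function.comp, X_pow_eq_monomial]
  rw [hspan, mem_ideal_span_monomial_image]
  intro m hm
  have hc : coeff m F ≠ 0 := mem_support_iff.mp hm
  have hdeg : m 0 + m 1 + m 2 = 3 * k := by
    have h1 : (Finsupp.weight 1) m = 3 * k := hhom hc
    change (Finsupp.weight fun _ => 1) m = 3 * k at h1
    rw [← Finsupp.degree_eq_weight_one] at h1
    rw [← h1, Finsupp.degree]
    rw [← Fin.sum_univ_three (fun i => m i)]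
    exact (Finset.sum_subset (Finset.subset_univ _)
      (fun i _ hi => Finsupp.notMem_support_iff.mp hi)).symm
  have hmd : m ≠ d := fun h => hc (h ▸ hcoeff)
  by_cases hbig : ∀ i : Fin 3, m i ≤ k
  · exfalso
    apply hmd
    have h0 : m 0 = k := by have := hbig 0; have := hbig 1; have := hbig 2; omega
    have h1 : m 1 = k := by have := hbig 0; have := hbig 1; have := hbig 2; omega
    have h2 : m 2 = k := by have := hbig 0; have := hbig 1; have := hbig 2; omega
    ext i
    fin_cases i <;> simp [hd, Finsupp.single_apply, h0, h1, h2]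
  · push_neg at hbig
    obtain ⟨i, hi⟩ := hbig
    exact ⟨Finsupp.single i (k + 1), ⟨i, rfl⟩, Finsupp.single_le_iff.mpr (by omega)⟩

lemma xi_key (n k : ℕ) (hodd : Odd k) (a b c : Fin n) :
    ((X a - X b) * (X a - X c) * (X b - X c) : MvPolynomial (Fin n) ℤ) ^ k ∈
      Ideal.span (Set.range fun i : Fin n => (X i : MvPolynomial (Fin n) ℤ) ^ (k + 1)) := by
  have h3 := xi_key3 k hodd
  have hmap := Ideal.mem_map_of_mem (rename (![a, b, c] : Fin 3 → Fin n)).toRingHom h3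
  rw [Ideal.map_span] at hmap
  have hle : Ideal.span ((rename (![a, b, c] : Fin 3 → Fin n)).toRingHom ''
        Set.range fun i : Fin 3 => (X i : MvPolynomial (Fin 3) ℤ) ^ (k + 1)) ≤
      Ideal.span (Set.range fun i : Fin n => (X i : MvPolynomial (Fin n) ℤ) ^ (k + 1)) := by
    rw [Ideal.span_le]
    rintro _ ⟨_, ⟨i, rfl⟩, rfl⟩
    exact Ideal.subset_span ⟨![a, b, c] i, by simp⟩
  have := hle hmap
  simpa [map_pow, map_mul, map_sub, rename_X] using this

/-- For `n ≥ 3` and odd `k ≥ 1`, in `ℤ[X_1,…,X_n]/(X_1^{k+1},…,X_n^{k+1})`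
(indices `0,…,n-1` here), one has `[(∏_{i=2}^{n} (A_1 − A_i)) · (A_2 − A_3)]^k = 0`. -/
theorem xi_odd_eq_zero (n k : ℕ) (hn : 3 ≤ n) (hk : 1 ≤ k) (hodd : Odd k)
    (I : Ideal (MvPolynomial (Fin n) ℤ))
    (hI : I = Ideal.span (Set.range fun i : Fin n => (X i : MvPolynomial (Fin n) ℤ) ^ (k + 1)))
    (A : Fin n → MvPolynomial (Fin n) ℤ ⧸ I)
    (hA : ∀ i, A i = Ideal.Quotient.mk I (X i)) :
    ((∏ i ∈ univ.erase ⟨0, by omega⟩, (A ⟨0, by omega⟩ - A i)) *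
        (A ⟨1, by omega⟩ - A ⟨2, by omega⟩)) ^ k = 0 := by
  set a : Fin n := ⟨0, by omega⟩ with ha
  set b : Fin n := ⟨1, by omega⟩ with hb
  set c : Fin n := ⟨2, by omega⟩ with hc
  simp only [hA]
  have key : ((∏ i ∈ univ.erase a, (Ideal.Quotient.mk I (X a) - Ideal.Quotient.mk I (X i))) *
      (Ideal.Quotient.mk I (X b) - Ideal.Quotient.mk I (X c))) ^ k
      = Ideal.Quotient.mk I (((∏ i ∈ univ.erase a, (X a - X i)) * (X b - X c)) ^ k) := by
    simp [map_pow, map_mul, map_prod, map_sub]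
  rw [key, Ideal.Quotient.eq_zero_iff_mem, hI]
  have hbmem : b ∈ univ.erase a := by
    simp [ha, hb, Fin.ext_iff]
  have hcmem : c ∈ (univ.erase a).erase b := by
    simp [ha, hb, hc, Fin.ext_iff]
  rw [← Finset.mul_prod_erase _ _ hbmem, ← Finset.mul_prod_erase _ _ hcmem]
  have hfactor : ((X a - X b) * ((X a - X c) *
        ∏ i ∈ ((univ.erase a).erase b).erase c, (X a - X i)) * (X b - X c)) ^ k
      = ((X a - X b) * (X a - X c) * (X b - X c) : MvPolynomial (Fin n) ℤ) ^ k *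
        (∏ i ∈ ((univ.erase a).erase b).erase c, (X a - X i)) ^ k := by
    rw [← mul_pow]; ring
  rw [hfactor]
  exact Ideal.mul_mem_right _ _ (xi_key n k hodd a b c)
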